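/- Define G_{n−1}^{α,β} = (1/(n−1)!) ∑_{j=0}^{n−1} (−1)^j C(n−1,j) p(α+j) F_{n−1}^β(α+j), where F_{n−1}^β(x) = ∏_{m=0}^{n−1} 1/(x−β−m). If p is a polynomial with deg p ≤ 2n−2, then G_{n−1}^{α,β} + G_{n−1}^{β,α} = 0. -/

import Mathlib

open Polynomial Finset

lemma leadingCoeff_basisDivisor (x y : ℝ) :
    (Lagrange.basisDivisor x y).leadingCoeff = (x - y)⁻¹ := by
  rw [Lagrange.basisDivisor, leadingCoeff_mul, leadingCoeff_C, leadingCoeff_X_sub_C, mul_one]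

lemma coeff_lagrange_basis {ι : Type*} [DecidableEq ι] (s : Finset ι) (v : ι → ℝ)
    (hvs : Set.InjOn v s) {i : ι} (hi : i ∈ s) :
    (Lagrange.basis s v i).coeff (#s - 1) = Lagrange.nodalWeight s v i := by
  rw [← Lagrange.natDegree_basis hvs hi, coeff_natDegree, Lagrange.basis,
    leadingCoeff_prod, Lagrange.nodalWeight]
  exact prod_congr rfl fun j _ => leadingCoeff_basisDivisor _ _

lemma sum_eval_mul_nodalWeight {ι : Type*} [DecidableEq ι] (s : Finset ι) (v : ι → ℝ)
    (hvs : Set.InjOn v s) (f : ℝ[X]) (hd : f.degree < ((#s - 1 : ℕ) : WithBot ℕ)) :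
    ∑ i ∈ s, f.eval (v i) * Lagrange.nodalWeight s v i = 0 := by
  have hd' : f.degree < (#s : WithBot ℕ) :=
    lt_of_lt_of_le hd (Nat.cast_le.mpr (Nat.sub_le _ _))
  have h0 : f.coeff (#s - 1) = 0 := coeff_eq_zero_of_degree_lt hd
  rw [Lagrange.eq_interpolate hvs hd', Lagrange.interpolate_apply, finset_sum_coeff] at h0
  rw [← h0]
  exact (sum_congr rfl fun i hi => by
    rw [coeff_C_mul, coeff_lagrange_basis s v hvs hi]).symm

lemma prod_range_sub_cast (j : ℕ) :
    ∏ m ∈ Finset.range j, ((j : ℝ) - m) = j.factorial := by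
  rw [← Finset.prod_range_reflect (fun m => (j : ℝ) - m) j]
  have hterm : ∀ m ∈ Finset.range j, (j:ℝ) - ((j - 1 - m : ℕ) : ℝ) = (m:ℝ) + 1 := by
    intro m hm
    rw [Finset.mem_range] at hm
    rw [Nat.cast_sub (by omega), Nat.cast_sub (by omega)]
    push_cast; ring
  rw [prod_congr rfl hterm]
  exact_mod_cast Finset.prod_range_add_one_eq_factorial j

lemma prod_erase_sub_cast {n j : ℕ} (hj : j < n) :
    ∏ m ∈ (Finset.range n).erase j, ((j : ℝ) - m)
      = (-1) ^ (n - 1 - j) * j.factorial * (n - 1 - j).factorial := by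
  have hsplit : (Finset.range n).erase j = Finset.range j ∪ Finset.Ico (j+1) n := by
    ext i; simp only [mem_erase, mem_range, mem_union, mem_Ico]; omega
  have hdisj : Disjoint (Finset.range j) (Finset.Ico (j+1) n) := by
    rw [Finset.disjoint_left]; intro a ha hb
    simp only [mem_range] at ha; simp only [mem_Ico] at hb; omega
  rw [hsplit, prod_union hdisj, prod_range_sub_cast,
    Finset.prod_Ico_eq_prod_range]
  have h2 : ∏ k ∈ Finset.range (n - (j+1)), ((j:ℝ) - ((j + 1 + k : ℕ) : ℝ))
      = (-1) ^ (n - 1 - j) * (n - 1 - j).factorial := by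
    calc ∏ k ∈ Finset.range (n - (j+1)), ((j:ℝ) - ((j + 1 + k : ℕ) : ℝ))
        = ∏ k ∈ Finset.range (n - (j+1)), ((-1 : ℝ) * ((k:ℝ) + 1)) :=
          prod_congr rfl fun k _ => by push_cast; ring
      _ = (-1) ^ (n - (j+1)) * ∏ k ∈ Finset.range (n - (j+1)), ((k:ℝ) + 1) := by
          rw [prod_mul_distrib, prod_const, card_range]
      _ = (-1) ^ (n - 1 - j) * (n - 1 - j).factorial := by
          rw [show n - (j+1) = n - 1 - j by omega]
          congr 1
          exact_mod_cast Finset.prod_range_add_one_eq_factorial (n - 1 - j)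
  rw [h2]; ring

lemma key_coeff {n j : ℕ} (hj : j < n) :
    (((-1:ℝ)) ^ (n - 1 - j) * j.factorial * (n - 1 - j).factorial)⁻¹
      = (-1:ℝ) ^ (n-1) * ((1 / (n-1).factorial) * ((-1) ^ j * ((n-1).choose j : ℝ))) := by
  have hc : ((n-1).choose j : ℝ) = (n-1).factorial / (j.factorial * ((n-1) - j).factorial) :=
    Nat.cast_choose ℝ (by omega)
  have h1 : (j.factorial : ℝ) ≠ 0 := by exact_mod_cast j.factorial_ne_zero
  have h2 : ((n-1-j).factorial : ℝ) ≠ 0 := by exact_mod_cast (n-1-j).factorial_ne_zero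
  have h3 : ((n-1).factorial : ℝ) ≠ 0 := by exact_mod_cast (n-1).factorial_ne_zero
  have hs : ((-1:ℝ)) ^ (n - 1 - j) * (-1:ℝ)^j = (-1)^(n-1) := by
    rw [← pow_add]; congr 1; omega
  rw [show (n-1) - j = n - 1 - j from rfl] at hc
  rw [hc]
  rw [mul_inv, mul_inv]
  have hsign : ((-1:ℝ) ^ (n-1-j))⁻¹ = (-1:ℝ)^(n-1-j) := by
    rw [← inv_pow, inv_neg, inv_one]
  rw [hsign]
  field_simp
  rw [← hs, mul_assoc, ← pow_add, show j + j = 2*j by ring, pow_mul]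
  norm_num

/-- `G_{n−1}^{α,β} := (1/(n−1)!) ∑_{j=0}^{n−1} (−1)^j C(n−1,j) p(α+j) F_{n−1}^β(α+j)`,
with `F_{n−1}^β(x) = ∏_{m=0}^{n−1} 1/(x−β−m)`. -/
noncomputable def G (n : ℕ) (p : Polynomial ℝ) (α β : ℝ) : ℝ :=
  (1 / (Nat.factorial (n - 1) : ℝ)) *
    ∑ j ∈ Finset.range n, (-1 : ℝ) ^ j * (Nat.choose (n - 1) j : ℝ) *
      p.eval (α + (j : ℝ)) *
      ∏ m ∈ Finset.range n, (1 / (α + (j : ℝ) - β - (m : ℝ)))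

/-- If `deg p ≤ 2n−2` and `α − β ∉ ℤ`, then `G_{n−1}^{α,β} + G_{n−1}^{β,α} = 0`. -/
theorem G_antisymmetric (n : ℕ) (hn : 1 ≤ n) (p : Polynomial ℝ)
    (hp : p.degree ≤ (2 * n - 2 : ℕ))
    (α β : ℝ) (hαβ : ∀ m : ℤ, α - β ≠ (m : ℝ)) :
    G n p α β + G n p β α = 0 := by
  have hβα : ∀ m : ℤ, β - α ≠ (m : ℝ) := by
    intro m h
    exact hαβ (-m) (by push_cast; linarith)
  set v : ℕ → ℝ := fun i => if i < n then α + (i : ℝ) else β + ((i - n : ℕ) : ℝ) with hv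
  have hvlt : ∀ i, i < n → v i = α + (i : ℝ) := by
    intro i hi; simp only [hv]; rw [if_pos hi]
  have hvge : ∀ i, n ≤ i → v i = β + ((i - n : ℕ) : ℝ) := by
    intro i hi; simp only [hv]; rw [if_neg (by omega)]
  have hinj : Set.InjOn v (Finset.range (2 * n)) := by
    intro i hi j hj hij
    by_cases h1 : i < n <;> by_cases h2 : j < n
    · rw [hvlt i h1, hvlt j h2] at hij
      have : (i : ℝ) = j := by linarith
      exact_mod_cast this
    · rw [hvlt i h1, hvge j (by omega)] at hij
      exact absurd (show α - β = (((j - n : ℕ) : ℤ) - (i : ℤ) : ℤ) by push_cast; linarith)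
        (hαβ _)
    · rw [hvge i (by omega), hvlt j h2] at hij
      exact absurd (show α - β = (((i - n : ℕ) : ℤ) - (j : ℤ) : ℤ) by push_cast; linarith)
        (hαβ _)
    · rw [hvge i (by omega), hvge j (by omega)] at hij
      have : ((i - n : ℕ) : ℝ) = ((j - n : ℕ) : ℝ) := by linarith
      have : (i - n : ℕ) = (j - n : ℕ) := by exact_mod_cast this
      omega
  have hdeg : p.degree < ((#(Finset.range (2 * n)) - 1 : ℕ) : WithBot ℕ) := by
    rw [Finset.card_range]
    refine lt_of_le_of_lt hp ?_
    exact_mod_cast Nat.cast_lt.mpr (by omega : 2 * n - 2 < 2 * n - 1)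
  have hL := sum_eval_mul_nodalWeight (Finset.range (2 * n)) v hinj p hdeg
  have hL' : (∑ j ∈ Finset.range n,
        p.eval (v j) * Lagrange.nodalWeight (Finset.range (2 * n)) v j)
      + (∑ j ∈ Finset.range n,
        p.eval (v (n + j)) * Lagrange.nodalWeight (Finset.range (2 * n)) v (n + j)) = 0 := by
    rw [← Finset.sum_range_add
      (fun i => p.eval (v i) * Lagrange.nodalWeight (Finset.range (2 * n)) v i) n n,
      show n + n = 2 * n by ring]
    exact hL
  -- weight at an α-node
  have hWα : ∀ j, j < n → Lagrange.nodalWeight (Finset.range (2 * n)) v j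
      = ((-1 : ℝ) ^ (n - 1 - j) * j.factorial * (n - 1 - j).factorial)⁻¹
        * ∏ m ∈ Finset.range n, (1 / (α + (j : ℝ) - β - (m : ℝ))) := by
    intro j hj
    have hsplit : (Finset.range (2 * n)).erase j
        = (Finset.range n).erase j ∪ Finset.Ico n (2 * n) := by
      ext i
      simp only [Finset.mem_erase, Finset.mem_range, Finset.mem_union, Finset.mem_Ico]
      omega
    have hdisj : Disjoint ((Finset.range n).erase j) (Finset.Ico n (2 * n)) := by
      rw [Finset.disjoint_left]
      intro a ha hb
      simp only [Finset.mem_erase, Finset.mem_range] at ha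
      simp only [Finset.mem_Ico] at hb
      omega
    rw [Lagrange.nodalWeight, hsplit, Finset.prod_union hdisj]
    congr 1
    · calc ∏ m ∈ (Finset.range n).erase j, (v j - v m)⁻¹
          = ∏ m ∈ (Finset.range n).erase j, ((j : ℝ) - m)⁻¹ := by
            refine Finset.prod_congr rfl fun m hm => ?_
            have hm' : m < n := Finset.mem_range.mp (Finset.mem_of_mem_erase hm)
            rw [hvlt j hj, hvlt m hm']
            congr 1; ring
        _ = (∏ m ∈ (Finset.range n).erase j, ((j : ℝ) - m))⁻¹ := Finset.prod_inv_distrib _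
        _ = ((-1 : ℝ) ^ (n - 1 - j) * j.factorial * (n - 1 - j).factorial)⁻¹ := by
            rw [prod_erase_sub_cast hj]
    · rw [Finset.prod_Ico_eq_prod_range, show 2 * n - n = n by omega]
      refine Finset.prod_congr rfl fun k hk => ?_
      have hk' : v (n + k) = β + (k : ℝ) := by
        rw [hvge (n + k) (by omega), Nat.add_sub_cancel_left]
      rw [hk', hvlt j hj, one_div]
      congr 1; ring
  -- weight at a β-node
  have hWβ : ∀ j, j < n → Lagrange.nodalWeight (Finset.range (2 * n)) v (n + j)
      = ((-1 : ℝ) ^ (n - 1 - j) * j.factorial * (n - 1 - j).factorial)⁻¹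
        * ∏ m ∈ Finset.range n, (1 / (β + (j : ℝ) - α - (m : ℝ))) := by
    intro j hj
    have hvnj : v (n + j) = β + (j : ℝ) := by
      rw [hvge (n + j) (by omega), Nat.add_sub_cancel_left]
    have hsplit : (Finset.range (2 * n)).erase (n + j)
        = ((Finset.range n).erase j).image (n + ·) ∪ Finset.range n := by
      ext i
      simp only [Finset.mem_erase, Finset.mem_range, Finset.mem_union, Finset.mem_image]
      constructor
      · intro ⟨hne, hi⟩
        by_cases hin : i < n
        · exact Or.inr hin
        · exact Or.inl ⟨i - n, ⟨by omega, by omega⟩, by omega⟩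
      · rintro (⟨a, ⟨ha1, ha2⟩, rfl⟩ | h) <;> omega
    have hdisj : Disjoint (((Finset.range n).erase j).image (n + ·)) (Finset.range n) := by
      rw [Finset.disjoint_left]
      intro a ha hb
      obtain ⟨b, hbmem, rfl⟩ := Finset.mem_image.mp ha
      rw [Finset.mem_range] at hb
      omega
    rw [Lagrange.nodalWeight, hsplit, Finset.prod_union hdisj]
    congr 1
    · rw [Finset.prod_image (fun a _ b _ h => by omega)]
      calc ∏ m ∈ (Finset.range n).erase j, (v (n + j) - v (n + m))⁻¹
          = ∏ m ∈ (Finset.range n).erase j, ((j : ℝ) - m)⁻¹ := by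
            refine Finset.prod_congr rfl fun m hm => ?_
            have hvm : v (n + m) = β + (m : ℝ) := by
              rw [hvge (n + m) (by omega), Nat.add_sub_cancel_left]
            rw [hvnj, hvm]
            congr 1; ring
        _ = (∏ m ∈ (Finset.range n).erase j, ((j : ℝ) - m))⁻¹ := Finset.prod_inv_distrib _
        _ = ((-1 : ℝ) ^ (n - 1 - j) * j.factorial * (n - 1 - j).factorial)⁻¹ := by
            rw [prod_erase_sub_cast hj]
    · refine Finset.prod_congr rfl fun m hm => ?_
      have hm' : m < n := Finset.mem_range.mp hm
      rw [hvnj, hvlt m hm', one_div]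
      congr 1; ring
  -- identify the two halves with G
  have hGα : ∑ j ∈ Finset.range n,
      p.eval (v j) * Lagrange.nodalWeight (Finset.range (2 * n)) v j
      = (-1 : ℝ) ^ (n - 1) * G n p α β := by
    rw [G, ← mul_assoc, Finset.mul_sum]
    refine Finset.sum_congr rfl fun j hj => ?_
    rw [Finset.mem_range] at hj
    rw [hWα j hj, hvlt j hj, key_coeff hj]
    ring
  have hGβ : ∑ j ∈ Finset.range n,
      p.eval (v (n + j)) * Lagrange.nodalWeight (Finset.range (2 * n)) v (n + j)
      = (-1 : ℝ) ^ (n - 1) * G n p β α := by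
    rw [G, ← mul_assoc, Finset.mul_sum]
    refine Finset.sum_congr rfl fun j hj => ?_
    rw [Finset.mem_range] at hj
    have hvnj : v (n + j) = β + (j : ℝ) := by
      rw [hvge (n + j) (by omega), Nat.add_sub_cancel_left]
    rw [hWβ j hj, hvnj, key_coeff hj]
    ring
  rw [hGα, hGβ, ← mul_add] at hL'
  have hne : ((-1 : ℝ) ^ (n - 1)) ≠ 0 := pow_ne_zero _ (by norm_num)
  exact (mul_eq_zero.mp hL').resolve_left hne
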